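/- For any tree T and any maximum-weight bn-independent broadcast f on T, no leaf of T hears f from any vertex of degree at least 2. -/

import Mathlib

open SimpleGraph Finset
open scoped Classical

noncomputable section

/-- Eccentricity of a vertex. -/
def gecc {V : Type*} (G : SimpleGraph V) [Fintype V] (v : V) : ℕ :=
  Finset.univ.sup fun u => G.dist v u

/-- A broadcast: `f v ≤ e(v)` for all `v`. -/
def IsBroadcast {V : Type*} (G : SimpleGraph V) [Fintype V] (f : V → ℕ) : Prop :=
  ∀ v, f v ≤ gecc G v

/-- `u` hears `f` from `v`. -/
def Hears {V : Type*} (G : SimpleGraph V) (f : V → ℕ) (u v : V) : Prop :=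
  0 < f v ∧ G.dist u v ≤ f v

/-- Boundary independent broadcast: a vertex hearing two or more broadcasting
vertices lies in the boundary of each. -/
def BnIndep {V : Type*} (G : SimpleGraph V) [Fintype V] (f : V → ℕ) : Prop :=
  IsBroadcast G f ∧
    ∀ w v₁ v₂, v₁ ≠ v₂ → Hears G f w v₁ → Hears G f w v₂ → G.dist w v₁ = f v₁

/-- Weight of a broadcast. -/
def bweight {V : Type*} [Fintype V] (f : V → ℕ) : ℕ := ∑ v, f v

/-- The boundary independence number. -/
def alphaBn {V : Type*} (G : SimpleGraph V) [Fintype V] : ℕ :=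
  sSup {w | ∃ f, BnIndep G f ∧ bweight f = w}

/-- Set of branch vertices (degree at least 3). -/
def branchSet {V : Type*} (G : SimpleGraph V) [Fintype V] : Finset V :=
  Finset.univ.filter fun v => 3 ≤ G.degree v

/-- `l` is a leaf joined to `v` by an endpath (all internal vertices of degree 2). -/
def IsEndpathTo {V : Type*} (G : SimpleGraph V) [Fintype V] (v l : V) : Prop :=
  G.degree l = 1 ∧ ∃ p : G.Walk v l, p.IsPath ∧
    ∀ u ∈ p.support, u ≠ v → u ≠ l → G.degree u = 2

/-- Leaf set `L(v)` of a vertex `v`. -/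
def leafSet {V : Type*} (G : SimpleGraph V) [Fintype V] (v : V) : Finset V :=
  Finset.univ.filter fun l => IsEndpathTo G v l

/-- `R(T)`: branch vertices with at most one leaf in their leaf set. -/
def rset {V : Type*} (G : SimpleGraph V) [Fintype V] : Finset V :=
  (branchSet G).filter fun v => (leafSet G v).card ≤ 1

/-- Edge `uv` is covered by broadcasting vertex `x`. -/
def Covers {V : Type*} (G : SimpleGraph V) (f : V → ℕ) (x u v : V) : Prop :=
  0 < f x ∧ G.Adj u v ∧ G.dist u x ≤ f x ∧ G.dist v x ≤ f x ∧
    (G.dist u x < f x ∨ G.dist v x < f x)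

/-- The graph `G - U_f^E` obtained by deleting all `f`-uncovered edges. -/
def coveredSubgraph {V : Type*} (G : SimpleGraph V) (f : V → ℕ) : SimpleGraph V where
  Adj u v := G.Adj u v ∧ ∃ x, Covers G f x u v
  symm := ⟨by
    rintro u v ⟨h, x, h1, h2, h3, h4, h5⟩
    exact ⟨h.symm, x, h1, h2.symm, h4, h3, h5.symm⟩⟩
  loopless := ⟨by rintro u ⟨h, -⟩; exact G.loopless.irrefl u h⟩

/-- `f` is a maximal bn-independent broadcast. -/
def MaximalBn {V : Type*} (G : SimpleGraph V) [Fintype V] (f : V → ℕ) : Prop :=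
  BnIndep G f ∧ ∀ g, BnIndep G g → (∀ v, f v ≤ g v) → g = f

/-- The `f`-private boundary of `v`: vertices of `N_f(v)` not dominated once the
broadcast strength of `v` is lowered by one. -/
def privBoundary {V : Type*} (G : SimpleGraph V) (f : V → ℕ) (v : V) : Set V :=
  {u | G.dist u v ≤ f v ∧ ∀ x, ¬ Hears G (Function.update f v (f v - 1)) u x}

/-- The branch representation: branch vertices adjacent iff the path between them
contains no other branch vertex. -/
def branchRep {V : Type*} (G : SimpleGraph V) [Fintype V] : SimpleGraph V where
  Adj b₁ b₂ := b₁ ≠ b₂ ∧ 3 ≤ G.degree b₁ ∧ 3 ≤ G.degree b₂ ∧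
    ∀ p : G.Walk b₁ b₂, p.IsPath → ∀ u ∈ p.support, 3 ≤ G.degree u → u = b₁ ∨ u = b₂
  symm := ⟨by
    rintro a b ⟨hab, ha, hb, h⟩
    refine ⟨hab.symm, hb, ha, fun p hp u hu hdeg => ?_⟩
    have hu' : u ∈ p.reverse.support := by
      rw [SimpleGraph.Walk.support_reverse]; exact List.mem_reverse.mpr hu
    exact (h p.reverse hp.reverse u hu' hdeg).symm⟩
  loopless := ⟨by rintro v ⟨h, -⟩; exact h rfl⟩

/-- Hearing independent broadcast. -/
def HIndep {V : Type*} (G : SimpleGraph V) [Fintype V] (f : V → ℕ) : Prop :=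
  IsBroadcast G f ∧ ∀ u v, u ≠ v → 0 < f u → 0 < f v → f v < G.dist u v

/-- The hearing independence number. -/
def alphaH {V : Type*} (G : SimpleGraph V) [Fintype V] : ℕ :=
  sSup {w | ∃ f, HIndep G f ∧ bweight f = w}

/-- Diameter. -/
def gdiam {V : Type*} (G : SimpleGraph V) [Fintype V] : ℕ :=
  Finset.univ.sup fun v => gecc G v

/-! ### Auxiliary lemmas for the proof of `stmt6` -/

namespace Stmt6Aux

variable {V : Type*} {T : SimpleGraph V}

/-- In a tree, every path between two vertices realizes the distance. -/
lemma tree_path_length (hT : T.IsTree) {u v : V} (p : T.Walk u v) (hp : p.IsPath) :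
    p.length = T.dist u v := by
  obtain ⟨q, hq, hql⟩ := hT.isConnected.exists_path_of_dist u v
  have := (hT.existsUnique_path u v).unique hp hq
  rw [this, hql]

/-- In a tree, the support of a path between two vertices is contained in the support of
any walk between them. -/
lemma path_support_subset_walk (hT : T.IsTree) {u v : V} {p : T.Walk u v}
    (hp : p.IsPath) (w : T.Walk u v) : ∀ x ∈ p.support, x ∈ w.support := by
  intro x hx
  have h1 : w.bypass.IsPath := SimpleGraph.Walk.bypass_isPath w
  have := (hT.existsUnique_path u v).unique hp h1
  exact SimpleGraph.Walk.support_bypass_subset w (this ▸ hx)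

lemma dist_adj (hc : T.Connected) {u v : V} (h : T.Adj u v) : T.dist u v = 1 := by
  have h1 : T.dist u v ≤ 1 := by
    have := SimpleGraph.dist_le (SimpleGraph.Walk.cons h SimpleGraph.Walk.nil)
    simpa using this
  have h2 : 0 < T.dist u v := hc.pos_dist_of_ne h.ne
  omega

lemma exists_step (hc : T.Connected) {v z : V} (h : 1 ≤ T.dist v z) :
    ∃ m, T.Adj v m ∧ T.dist m z + 1 = T.dist v z := by
  obtain ⟨p, hp, hpl⟩ := hc.exists_path_of_dist v z
  cases p with
  | nil => simp at hpl; simp at h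
  | cons hadj q =>
    rename_i m
    refine ⟨m, hadj, ?_⟩
    have h1 : T.dist m z ≤ q.length := SimpleGraph.dist_le q
    have h2 : T.dist v z ≤ T.dist v m + T.dist m z := hc.dist_triangle
    have h3 : T.dist v m = 1 := dist_adj hc hadj
    have h4 : q.length + 1 = T.dist v z := by
      simpa [SimpleGraph.Walk.length_cons] using hpl
    omega

lemma exists_at_dist (hc : T.Connected) {v z : V} (j : ℕ) (h : j ≤ T.dist v z) :
    ∃ m, T.dist v m = j ∧ j + T.dist m z = T.dist v z := by
  induction j with
  | zero => exact ⟨v, by simp⟩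
  | succ i ih =>
    obtain ⟨m, hm1, hm2⟩ := ih (by omega)
    have h1 : 1 ≤ T.dist m z := by omega
    obtain ⟨m', hadj, hm'⟩ := exists_step hc h1
    refine ⟨m', ?_, by omega⟩
    have h2 : T.dist v m' ≤ T.dist v m + T.dist m m' := hc.dist_triangle
    have h3 : T.dist m m' = 1 := dist_adj hc hadj
    have h4 : T.dist v z ≤ T.dist v m' + T.dist m' z := hc.dist_triangle
    omega

/-- leaf step lemma: every vertex other than a leaf `l` has distance to `l` one more
than its distance to the unique neighbour of `l`. -/
lemma leaf_step (hT : T.IsTree) [Fintype V] {l b y : V}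
    (hl : T.degree l = 1) (hb : T.Adj l b) (hy : y ≠ l) :
    T.dist y l = T.dist y b + 1 := by
  have hc := hT.isConnected
  have hle : T.dist y l ≤ T.dist y b + 1 := by
    have := hc.dist_triangle (u := y) (v := b) (w := l)
    have hb1 : T.dist b l = 1 := dist_adj hc hb.symm
    omega
  have hge : T.dist y b + 1 ≤ T.dist y l := by
    obtain ⟨p, hp, hpl⟩ := hc.exists_path_of_dist l y
    cases p with
    | nil => exact absurd rfl hy
    | @cons _ x _ hadj q =>
      -- x is a neighbour of l, hence x = b
      have hxb : x = b := by
        have hcard : (T.neighborFinset l).card = 1 := hl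
        obtain ⟨c, hc1⟩ := Finset.card_eq_one.mp hcard
        have hx : x ∈ T.neighborFinset l := by
          rw [SimpleGraph.mem_neighborFinset]; exact hadj
        have hbm : b ∈ T.neighborFinset l := by
          rw [SimpleGraph.mem_neighborFinset]; exact hb
        rw [hc1, Finset.mem_singleton] at hx hbm
        rw [hx, hbm]
      have h1 : T.dist b y ≤ q.length := by
        rw [← hxb]; exact SimpleGraph.dist_le q
      have h2 : q.length + 1 = T.dist l y := by
        simpa [SimpleGraph.Walk.length_cons] using hpl
      have h3 : T.dist l y = T.dist y l := SimpleGraph.dist_comm ..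
      have h4 : T.dist b y = T.dist y b := SimpleGraph.dist_comm ..
      omega
  omega

/-- helper for `sep`: a geodesic from a "side" neighbour avoids `v`. -/
lemma side_avoid (hT : T.IsTree) {v t z : V} (ht : T.Adj v t)
    (hz : T.dist v z = T.dist t z + 1) :
    ∃ q : T.Walk t z, q.IsPath ∧ q.length = T.dist t z ∧ v ∉ q.support := by
  have hc := hT.isConnected
  obtain ⟨q, hq, hql⟩ := hc.exists_path_of_dist t z
  refine ⟨q, hq, hql, ?_⟩
  intro hvq
  have e := congrArg SimpleGraph.Walk.length (q.take_spec hvq)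
  rw [SimpleGraph.Walk.length_append] at e
  have l1 : (q.takeUntil v hvq).length = T.dist t v :=
    tree_path_length hT _ (hq.takeUntil hvq)
  have l2 : (q.dropUntil v hvq).length = T.dist v z :=
    tree_path_length hT _ (hq.dropUntil hvq)
  have h1 : T.dist t v = 1 := dist_adj hc ht.symm
  omega

/-- In a tree, any walk between two distinct neighbours `t, t'` of `v` passes through `v`. -/
lemma mid_mem (hT : T.IsTree) {v t t' : V} (ht : T.Adj v t) (ht' : T.Adj v t')
    (htt' : t ≠ t') (w : T.Walk t t') : v ∈ w.support := by
  have hP : (SimpleGraph.Walk.cons ht.symm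
      (SimpleGraph.Walk.cons ht' SimpleGraph.Walk.nil)).IsPath := by
    rw [SimpleGraph.Walk.cons_isPath_iff]
    constructor
    · rw [SimpleGraph.Walk.cons_isPath_iff]
      constructor
      · exact SimpleGraph.Walk.IsPath.nil
      · simp [ht'.ne]
    · simp [ht.ne', htt']
  have := path_support_subset_walk hT hP w v (by simp)
  exact this

lemma dist_two_nbrs (hT : T.IsTree) {v t t' : V} (ht : T.Adj v t) (ht' : T.Adj v t')
    (htt' : t ≠ t') : T.dist t t' = 2 := by
  have hP : (SimpleGraph.Walk.cons ht.symm
      (SimpleGraph.Walk.cons ht' SimpleGraph.Walk.nil)).IsPath := by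
    rw [SimpleGraph.Walk.cons_isPath_iff]
    refine ⟨?_, by simp [ht.ne', htt']⟩
    rw [SimpleGraph.Walk.cons_isPath_iff]
    exact ⟨SimpleGraph.Walk.IsPath.nil, by simp [ht'.ne]⟩
  have := tree_path_length hT _ hP
  simpa using this.symm

/-- The separation lemma: if `z` lies behind neighbour `t` of `v` and `z'` behind a
different neighbour `t'`, then the distance from `z` to `z'` adds up through `v`. -/
lemma sep (hT : T.IsTree) {v t t' z z' : V} (ht : T.Adj v t) (ht' : T.Adj v t')
    (htt' : t ≠ t') (hz : T.dist v z = T.dist t z + 1)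
    (hz' : T.dist v z' = T.dist t' z' + 1) :
    T.dist z z' = T.dist z v + T.dist v z' := by
  have hc := hT.isConnected
  obtain ⟨r, hr, hrl⟩ := hc.exists_path_of_dist z z'
  by_cases hvr : v ∈ r.support
  · have e := congrArg SimpleGraph.Walk.length (r.take_spec hvr)
    rw [SimpleGraph.Walk.length_append] at e
    have l1 : (r.takeUntil v hvr).length = T.dist z v :=
      tree_path_length hT _ (hr.takeUntil hvr)
    have l2 : (r.dropUntil v hvr).length = T.dist v z' :=
      tree_path_length hT _ (hr.dropUntil hvr)
    omega
  · exfalso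
    obtain ⟨q, hq, hql, hvq⟩ := side_avoid hT ht hz
    obtain ⟨q', hq', hql', hvq'⟩ := side_avoid hT ht' hz'
    have hp : (SimpleGraph.Walk.cons ht q).IsPath := hq.cons hvq
    have hp' : (SimpleGraph.Walk.cons ht' q').IsPath := hq'.cons hvq'
    -- t' belongs to r.support
    have ht'r : t' ∈ r.support := by
      have hsub := path_support_subset_walk hT hp' ((SimpleGraph.Walk.cons ht q).append r)
      have hmem : t' ∈ ((SimpleGraph.Walk.cons ht q).append r).support := by
        refine hsub t' ?_
        rw [SimpleGraph.Walk.support_cons]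
        exact List.mem_cons_of_mem _ q'.start_mem_support
      rcases (SimpleGraph.Walk.mem_support_append_iff _ _).mp hmem with h | h
      · exfalso
        rw [SimpleGraph.Walk.support_cons] at h
        rcases List.mem_cons.mp h with h | h
        · exact ht'.ne h.symm
        · -- t' on geodesic t → z : contradiction
          have e := congrArg SimpleGraph.Walk.length (q.take_spec h)
          rw [SimpleGraph.Walk.length_append] at e
          have l1 : (q.takeUntil t' h).length = T.dist t t' :=
            tree_path_length hT _ (hq.takeUntil h)
          have l2 : (q.dropUntil t' h).length = T.dist t' z :=
            tree_path_length hT _ (hq.dropUntil h)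
          have htt2 : T.dist t t' = 2 := dist_two_nbrs hT ht ht' htt'
          have tri : T.dist v z ≤ T.dist v t' + T.dist t' z := hc.dist_triangle
          have hvt' : T.dist v t' = 1 := dist_adj hc ht'
          omega
      · exact h
    -- t belongs to r.support
    have htr : t ∈ r.support := by
      have hsub := path_support_subset_walk hT hp ((SimpleGraph.Walk.cons ht' q').append r.reverse)
      have hmem : t ∈ ((SimpleGraph.Walk.cons ht' q').append r.reverse).support := by
        refine hsub t ?_
        rw [SimpleGraph.Walk.support_cons]
        exact List.mem_cons_of_mem _ q.start_mem_support
      rcases (SimpleGraph.Walk.mem_support_append_iff _ _).mp hmem with h | h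
      · exfalso
        rw [SimpleGraph.Walk.support_cons] at h
        rcases List.mem_cons.mp h with h | h
        · exact ht.ne h.symm
        · have e := congrArg SimpleGraph.Walk.length (q'.take_spec h)
          rw [SimpleGraph.Walk.length_append] at e
          have l1 : (q'.takeUntil t h).length = T.dist t' t :=
            tree_path_length hT _ (hq'.takeUntil h)
          have l2 : (q'.dropUntil t h).length = T.dist t z' :=
            tree_path_length hT _ (hq'.dropUntil h)
          have htt2 : T.dist t' t = 2 := dist_two_nbrs hT ht' ht htt'.symm
          have tri : T.dist v z' ≤ T.dist v t + T.dist t z' := hc.dist_triangle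
          have hvt : T.dist v t = 1 := dist_adj hc ht
          omega
      · rw [SimpleGraph.Walk.support_reverse] at h
        exact List.mem_reverse.mp h
    -- both t and t' are on r, which avoids v: contradiction
    have hsplit := r.take_spec htr
    have ht'ab : t' ∈ (r.takeUntil t htr).support ∨ t' ∈ (r.dropUntil t htr).support := by
      rw [← SimpleGraph.Walk.mem_support_append_iff, hsplit]
      exact ht'r
    rcases ht'ab with h | h
    · have h2 : t' ∈ (r.takeUntil t htr).reverse.support := by
        rw [SimpleGraph.Walk.support_reverse]; exact List.mem_reverse.mpr h
      have hv1 := mid_mem hT ht ht' htt' (((r.takeUntil t htr).reverse).takeUntil t' h2)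
      have hv2 : v ∈ ((r.takeUntil t htr).reverse).support :=
        SimpleGraph.Walk.support_takeUntil_subset _ h2 hv1
      rw [SimpleGraph.Walk.support_reverse] at hv2
      have hv3 : v ∈ (r.takeUntil t htr).support := List.mem_reverse.mp hv2
      exact hvr (SimpleGraph.Walk.support_takeUntil_subset _ htr hv3)
    · have hv1 := mid_mem hT ht ht' htt' ((r.dropUntil t htr).takeUntil t' h)
      have hv2 : v ∈ (r.dropUntil t htr).support :=
        SimpleGraph.Walk.support_takeUntil_subset _ h hv1
      exact hvr (SimpleGraph.Walk.support_dropUntil_subset _ htr hv2)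


lemma bnIndep_pairwise [Fintype V] (hc : T.Connected) {f : V → ℕ} (hf : BnIndep T f) :
    ∀ x y, x ≠ y → 0 < f x → 0 < f y → f x + f y ≤ T.dist x y := by
  intro x y hxy hx hy
  by_contra hlt
  push_neg at hlt
  by_cases hc2 : T.dist x y ≤ f y
  · have h1 : Hears T f x y := ⟨hy, hc2⟩
    have h2 : Hears T f x x := ⟨hx, by simp [SimpleGraph.dist_self]⟩
    have := hf.2 x x y hxy h2 h1
    rw [SimpleGraph.dist_self] at this
    omega
  · push_neg at hc2
    obtain ⟨m, hm1, hm2⟩ := exists_at_dist hc (v := x) (z := y) (T.dist x y - f y) (by omega)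
    have h1 : Hears T f m y := ⟨hy, by omega⟩
    have h2 : Hears T f m x := ⟨hx, by rw [SimpleGraph.dist_comm]; omega⟩
    have h3 := hf.2 m x y hxy h2 h1
    rw [SimpleGraph.dist_comm] at h3
    omega

lemma pairwise_bnIndep [Fintype V] (hc : T.Connected) {g : V → ℕ}
    (hb : IsBroadcast T g)
    (hp : ∀ x y, x ≠ y → 0 < g x → 0 < g y → g x + g y ≤ T.dist x y) :
    BnIndep T g := by
  refine ⟨hb, fun w x y hxy hx hy => ?_⟩
  have h1 := hp x y hxy hx.1 hy.1
  have h2 : T.dist x y ≤ T.dist x w + T.dist w y := hc.dist_triangle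
  have h3 : T.dist x w = T.dist w x := SimpleGraph.dist_comm ..
  have h4 : T.dist w y = T.dist y w := SimpleGraph.dist_comm ..
  have h5 := hx.2
  have h6 := hy.2
  omega

lemma bweight_update [Fintype V] (f : V → ℕ) (a : V) (n : ℕ) :
    bweight (Function.update f a n) + f a = bweight f + n := by
  unfold bweight
  rw [Finset.sum_update_of_mem (Finset.mem_univ a)]
  have h : ∑ x ∈ (Finset.univ : Finset V), f x
      = ∑ x ∈ (Finset.univ : Finset V) \ {a}, f x + f a :=
    Finset.sum_eq_sum_sdiff_singleton_add (Finset.mem_univ a) f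
  omega

end Stmt6Aux

/-- In any maximum-weight bn-independent broadcast on a tree, no leaf hears the
broadcast from a vertex of degree at least 2. -/
theorem stmt6 {V : Type*} [Fintype V] (T : SimpleGraph V) (hT : T.IsTree)
    (f : V → ℕ) (hf : BnIndep T f) (hmax : bweight f = alphaBn T) :
    ∀ l v : V, T.degree l = 1 → 2 ≤ T.degree v → ¬ Hears T f l v := by
  intro l v hdegl hdegv hhear
  classical
  have hc : T.Connected := hT.isConnected
  obtain ⟨hfv, hdlv⟩ := hhear
  have hlv : l ≠ v := by
    intro h
    rw [h] at hdegl
    omega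
  have hd1 : 1 ≤ T.dist l v := hc.pos_dist_of_ne hlv
  -- f l = 0
  have hfl : f l = 0 := by
    by_contra h
    have h0 : 0 < f l := Nat.pos_of_ne_zero h
    have h2 := hf.2 l l v hlv ⟨h0, by simp [SimpleGraph.dist_self]⟩ ⟨hfv, hdlv⟩
    rw [SimpleGraph.dist_self] at h2
    omega
  have hpair := Stmt6Aux.bnIndep_pairwise hc hf
  -- the unique neighbour b of l
  obtain ⟨b, hbneigh⟩ := Finset.card_eq_one.mp (show (T.neighborFinset l).card = 1 from hdegl)
  have hadjlb : T.Adj l b := by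
    have hb2 : b ∈ T.neighborFinset l := by
      rw [hbneigh]; exact Finset.mem_singleton_self b
    rwa [SimpleGraph.mem_neighborFinset] at hb2
  -- the key inequality
  have hkey : ∀ y, y ≠ v → 0 < f y → f v + f y + 2 ≤ T.dist l y + T.dist l v := by
    intro y hyv hy
    have hyl : y ≠ l := by
      intro h; rw [h] at hy; omega
    have h1 : T.dist y l = T.dist y b + 1 := Stmt6Aux.leaf_step hT hdegl hadjlb hyl
    have h2 : T.dist v l = T.dist v b + 1 := Stmt6Aux.leaf_step hT hdegl hadjlb (Ne.symm hlv)
    have h3 : f v + f y ≤ T.dist v y := hpair v y (Ne.symm hyv) hfv hy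
    have h4 : T.dist v y ≤ T.dist v b + T.dist b y := hc.dist_triangle
    have c1 : T.dist v l = T.dist l v := SimpleGraph.dist_comm ..
    have c2 : T.dist y l = T.dist l y := SimpleGraph.dist_comm ..
    have c3 : T.dist b y = T.dist y b := SimpleGraph.dist_comm ..
    omega
  have hgecc : ∀ x w : V, T.dist x w ≤ gecc T x := fun x w =>
    Finset.le_sup (f := fun u => T.dist x u) (Finset.mem_univ w)
  -- improvements are impossible
  have himpr : ∀ g : V → ℕ, BnIndep T g → bweight g ≤ bweight f := by
    intro g hg
    rw [hmax]
    refine le_csSup ⟨∑ u, gecc T u, ?_⟩ ⟨g, hg, rfl⟩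
    rintro w ⟨f', hf', rfl⟩
    exact Finset.sum_le_sum fun i _ => hf'.1 i
  -- eccentricity witness for v
  obtain ⟨w₀, -, hw₀⟩ := Finset.exists_mem_eq_sup Finset.univ
    ⟨v, Finset.mem_univ v⟩ (fun u => T.dist v u)
  have hw₀k : f v ≤ T.dist v w₀ := by
    have h1 : f v ≤ gecc T v := hf.1 v
    have h2 : gecc T v = T.dist v w₀ := hw₀
    omega
  by_cases hcase1 : T.dist l v = 1
  -- ===================== CASE A : d = 1 ==========================
  · have hbv : b = v := by
      have hadj : T.Adj l v := by
        obtain ⟨p, hp, hpl⟩ := hc.exists_path_of_dist l v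
        rw [hcase1] at hpl
        cases p with
        | nil => simp at hpl
        | @cons _ x _ h q =>
          cases q with
          | nil => exact h
          | cons h' q' => simp [SimpleGraph.Walk.length_cons] at hpl
      have hv2 : v ∈ T.neighborFinset l := by
        rw [SimpleGraph.mem_neighborFinset]; exact hadj
      rw [hbneigh, Finset.mem_singleton] at hv2
      exact hv2.symm
    set g := Function.update (Function.update f v 0) l (f v + 1) with hg
    have hgl : g l = f v + 1 := by rw [hg, Function.update_self]
    have hgv : g v = 0 := by
      rw [hg, Function.update_of_ne (Ne.symm hlv), Function.update_self]
    have hgy : ∀ y, y ≠ l → y ≠ v → g y = f y := by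
      intro y hyl hyv
      rw [hg, Function.update_of_ne hyl, Function.update_of_ne hyv]
    -- validity witness for l
    have hwit : ∃ u, f v + 1 ≤ T.dist l u := by
      by_cases hS : ∃ y, y ≠ v ∧ 0 < f y
      · obtain ⟨y, hyv, hy⟩ := hS
        refine ⟨y, ?_⟩
        have := hkey y hyv hy
        omega
      · push_neg at hS
        by_cases hwl : w₀ = l
        · -- then f v = 1 ; use a second neighbour of v
          have hk1 : f v = 1 := by
            rw [hwl] at hw₀k
            have : T.dist v l = T.dist l v := SimpleGraph.dist_comm ..
            omega
          obtain ⟨t₁, ht₁, t₂, ht₂, ht12⟩ := Finset.one_lt_card.mp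
            (show 1 < (T.neighborFinset v).card from hdegv)
          rw [SimpleGraph.mem_neighborFinset] at ht₁ ht₂
          have hne : t₁ ≠ l ∨ t₂ ≠ l := by
            by_contra hcon
            push_neg at hcon
            exact ht12 (hcon.1.trans hcon.2.symm)
          have hget : ∃ t, T.Adj v t ∧ t ≠ l := by
            rcases hne with h | h
            exacts [⟨t₁, ht₁, h⟩, ⟨t₂, ht₂, h⟩]
          obtain ⟨t, hadjt, htl⟩ := hget
          refine ⟨t, ?_⟩
          have h1 : T.dist t l = T.dist t b + 1 := Stmt6Aux.leaf_step hT hdegl hadjlb htl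
          have h2 : T.dist t b = 1 := by
            rw [hbv]; exact Stmt6Aux.dist_adj hc hadjt.symm
          have c1 : T.dist t l = T.dist l t := SimpleGraph.dist_comm ..
          omega
        · refine ⟨w₀, ?_⟩
          have h1 : T.dist w₀ l = T.dist w₀ b + 1 := Stmt6Aux.leaf_step hT hdegl hadjlb hwl
          have h2 : T.dist w₀ b = T.dist v w₀ := by
            rw [hbv]; exact SimpleGraph.dist_comm ..
          have c1 : T.dist w₀ l = T.dist l w₀ := SimpleGraph.dist_comm ..
          omega
    obtain ⟨u₀, hu₀⟩ := hwit
    have hbg : IsBroadcast T g := by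
      intro x
      by_cases hx1 : x = l
      · rw [hx1, hgl]
        exact le_trans hu₀ (hgecc l u₀)
      · by_cases hx2 : x = v
        · rw [hx2, hgv]; exact Nat.zero_le _
        · rw [hgy x hx1 hx2]; exact hf.1 x
    have hpg : ∀ x y, x ≠ y → 0 < g x → 0 < g y → g x + g y ≤ T.dist x y := by
      intro x y hxy hx hy
      have hxv : x ≠ v := by intro h; rw [h, hgv] at hx; omega
      have hyv : y ≠ v := by intro h; rw [h, hgv] at hy; omega
      by_cases hxl : x = l
      · have hyl : y ≠ l := fun hh => hxy (hxl.trans hh.symm)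
        rw [hxl, hgl, hgy y hyl hyv]
        have hyf : 0 < f y := by
          have := hgy y hyl hyv; rw [this] at hy; exact hy
        have := hkey y hyv hyf
        omega
      · by_cases hyl : y = l
        · rw [hyl, hgl, hgy x hxl hxv]
          have hxf : 0 < f x := by
            have := hgy x hxl hxv; rw [this] at hx; exact hx
          have := hkey x hxv hxf
          have c1 : T.dist x l = T.dist l x := SimpleGraph.dist_comm ..
          omega
        · rw [hgy x hxl hxv, hgy y hyl hyv]
          have hxf : 0 < f x := by
            have := hgy x hxl hxv; rw [this] at hx; exact hx
          have hyf : 0 < f y := by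
            have := hgy y hyl hyv; rw [this] at hy; exact hy
          exact hpair x y hxy hxf hyf
    have hle := himpr g (Stmt6Aux.pairwise_bnIndep hc hbg hpg)
    have e1 := Stmt6Aux.bweight_update (Function.update f v 0) l (f v + 1)
    have e2 := Stmt6Aux.bweight_update f v 0
    have e3 : (Function.update f v 0) l = 0 := by
      rw [Function.update_of_ne hlv]; exact hfl
    rw [← hg] at e1
    rw [e3] at e1
    omega
  -- ===================== d ≥ 2 ==========================
  · have hd2 : 2 ≤ T.dist l v := by omega
    have hvl1 : 1 ≤ T.dist v l := by
      have : T.dist v l = T.dist l v := SimpleGraph.dist_comm ..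
      omega
    obtain ⟨s, hs_adj, hs_dist⟩ := Stmt6Aux.exists_step hc hvl1
    by_cases hB : ∃ z, T.dist v z + T.dist l v = f v + 1 ∧ f v + 1 ≤ T.dist l z
    -- ===================== CASE B ==========================
    · obtain ⟨z, hz1, hz2⟩ := hB
      have hzv : z ≠ v := by
        intro h
        rw [h, SimpleGraph.dist_self] at hz1
        omega
      have hzl : z ≠ l := by
        intro h
        rw [h, SimpleGraph.dist_self] at hz2
        omega
      have hfz : f z = 0 := by
        by_contra h
        have h0 : 0 < f z := Nat.pos_of_ne_zero h
        have := hpair v z (Ne.symm hzv) hfv h0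
        omega
      set g := Function.update (Function.update (Function.update f v 0) l
        (f v + 2 - T.dist l v)) z (T.dist l v - 1) with hg
      have hgz : g z = T.dist l v - 1 := by rw [hg, Function.update_self]
      have hgl : g l = f v + 2 - T.dist l v := by
        rw [hg, Function.update_of_ne hzl.symm, Function.update_self]
      have hgv : g v = 0 := by
        rw [hg, Function.update_of_ne (Ne.symm hzv), Function.update_of_ne (Ne.symm hlv),
          Function.update_self]
      have hgy : ∀ y, y ≠ l → y ≠ v → y ≠ z → g y = f y := by
        intro y h1 h2 h3
        rw [hg, Function.update_of_ne h3, Function.update_of_ne h1, Function.update_of_ne h2]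
      have hbg : IsBroadcast T g := by
        intro x
        by_cases hx1 : x = z
        · rw [hx1, hgz]
          have h1 : T.dist z l ≤ gecc T z := hgecc z l
          have c1 : T.dist z l = T.dist l z := SimpleGraph.dist_comm ..
          omega
        · by_cases hx2 : x = l
          · rw [hx2, hgl]
            have h1 : T.dist l z ≤ gecc T l := hgecc l z
            omega
          · by_cases hx3 : x = v
            · rw [hx3, hgv]; exact Nat.zero_le _
            · rw [hgy x hx2 hx3 hx1]; exact hf.1 x
      have hpg : ∀ x y, x ≠ y → 0 < g x → 0 < g y → g x + g y ≤ T.dist x y := by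
        have key2 : ∀ y, y ≠ l → y ≠ v → y ≠ z → 0 < g y →
            (g l + g y ≤ T.dist l y ∧ g z + g y ≤ T.dist z y) := by
          intro y h1 h2 h3 hy
          have hyf : 0 < f y := by
            have := hgy y h1 h2 h3; rw [this] at hy; exact hy
          have hk := hkey y h2 hyf
          have h4 : f v + f y ≤ T.dist v y := hpair v y (Ne.symm h2) hfv hyf
          have h5 : T.dist v y ≤ T.dist v z + T.dist z y := hc.dist_triangle
          have c1 : T.dist v z = T.dist z v := SimpleGraph.dist_comm ..
          rw [hgl, hgz, hgy y h1 h2 h3]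
          constructor <;> omega
        intro x y hxy hx hy
        have hxv : x ≠ v := by intro h; rw [h, hgv] at hx; omega
        have hyv : y ≠ v := by intro h; rw [h, hgv] at hy; omega
        by_cases hxl : x = l
        · by_cases hyz : y = z
          · rw [hxl, hyz, hgl, hgz]
            omega
          · have hyl : y ≠ l := fun hh => hxy (hxl.trans hh.symm)
            rw [hxl]
            exact (key2 y hyl hyv hyz hy).1
        · by_cases hxz : x = z
          · by_cases hyl : y = l
            · rw [hxz, hyl, hgl, hgz]
              have c1 : T.dist z l = T.dist l z := SimpleGraph.dist_comm ..
              omega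
            · have hyz : y ≠ z := fun hh => hxy (hxz.trans hh.symm)
              rw [hxz]
              have := (key2 y hyl hyv hyz hy).2
              exact this
          · by_cases hyl : y = l
            · have h := (key2 x hxl hxv hxz hx).1
              rw [hyl]
              have c1 : T.dist x l = T.dist l x := SimpleGraph.dist_comm ..
              omega
            · by_cases hyz : y = z
              · have h := (key2 x hxl hxv hxz hx).2
                rw [hyz]
                have c1 : T.dist x z = T.dist z x := SimpleGraph.dist_comm ..
                omega
              · rw [hgy x hxl hxv hxz, hgy y hyl hyv hyz]
                have hxf : 0 < f x := by
                  have := hgy x hxl hxv hxz; rw [this] at hx; exact hx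
                have hyf : 0 < f y := by
                  have := hgy y hyl hyv hyz; rw [this] at hy; exact hy
                exact hpair x y hxy hxf hyf
      have hle := himpr g (Stmt6Aux.pairwise_bnIndep hc hbg hpg)
      have e1 := Stmt6Aux.bweight_update (Function.update (Function.update f v 0) l
        (f v + 2 - T.dist l v)) z (T.dist l v - 1)
      have e2 := Stmt6Aux.bweight_update (Function.update f v 0) l (f v + 2 - T.dist l v)
      have e3 := Stmt6Aux.bweight_update f v 0
      have e4 : (Function.update (Function.update f v 0) l (f v + 2 - T.dist l v)) z = 0 := by
        rw [Function.update_of_ne hzl, Function.update_of_ne hzv]; exact hfz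
      have e5 : (Function.update f v 0) l = 0 := by
        rw [Function.update_of_ne hlv]; exact hfl
      rw [← hg] at e1
      rw [e4] at e1
      rw [e5] at e2
      omega
    -- ===================== CASE C ==========================
    · push_neg at hB
      -- choose a neighbour t of v with t ≠ s
      obtain ⟨t₁, ht₁, t₂, ht₂, ht12⟩ := Finset.one_lt_card.mp
        (show 1 < (T.neighborFinset v).card from hdegv)
      rw [SimpleGraph.mem_neighborFinset] at ht₁ ht₂
      have hget : ∃ t, T.Adj v t ∧ t ≠ s := by
        by_cases h1 : t₁ = s
        · exact ⟨t₂, ht₂, by rw [← h1]; exact Ne.symm ht12⟩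
        · exact ⟨t₁, ht₁, h1⟩
      obtain ⟨t, hadjt, hts⟩ := hget
      -- main case-C argument: nothing far lies behind a non-s neighbour
      have hCkey : ∀ z m, T.Adj v m → T.dist m z + 1 = T.dist v z → m ≠ s →
          f v + 1 ≤ T.dist v z + T.dist l v → False := by
        intro z m hm hmz hms hfar
        have hsep : T.dist l z = T.dist l v + T.dist v z :=
          Stmt6Aux.sep hT hs_adj hm (Ne.symm hms) (by omega) (by omega)
        obtain ⟨m', hm'1, hm'2⟩ := Stmt6Aux.exists_at_dist hc (v := v) (z := z)
          (f v + 1 - T.dist l v) (by omega)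
        have tri : T.dist l z ≤ T.dist l m' + T.dist m' z := hc.dist_triangle
        have h2 := hB m' (by omega)
        omega
      -- every broadcaster lies behind s
      have hbehind : ∀ y, y ≠ v → 0 < f y → T.dist s y + 1 = T.dist v y := by
        intro y hyv hy
        have h1 : f v + f y ≤ T.dist v y := hpair v y (Ne.symm hyv) hfv hy
        obtain ⟨m, hm_adj, hm_dist⟩ := Stmt6Aux.exists_step hc (show 1 ≤ T.dist v y by omega)
        by_cases hms : m = s
        · rwa [hms] at hm_dist
        · exact absurd (hCkey y m hm_adj hm_dist hms (by omega)) (fun h => h)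
      -- w₀ also lies behind s
      have hw₀v : w₀ ≠ v := by
        intro h
        rw [h, SimpleGraph.dist_self] at hw₀k
        omega
      have hw₀s : T.dist s w₀ + 1 = T.dist v w₀ := by
        obtain ⟨m, hm_adj, hm_dist⟩ := Stmt6Aux.exists_step hc
          (show 1 ≤ T.dist v w₀ by omega)
        by_cases hms : m = s
        · rwa [hms] at hm_dist
        · exact absurd (hCkey w₀ m hm_adj hm_dist hms (by omega)) (fun h => h)
      -- distances through v from t
      have hsep_t : ∀ z, z ≠ v → T.dist s z + 1 = T.dist v z →
          T.dist t z = T.dist t v + T.dist v z := by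
        intro z hzv hz
        have h0 : T.dist v t = T.dist t t + 1 := by
          rw [SimpleGraph.dist_self, Stmt6Aux.dist_adj hc hadjt]
        exact Stmt6Aux.sep hT hadjt hs_adj hts h0 (by omega)
      have hvt1 : T.dist t v = 1 := by
        rw [SimpleGraph.dist_comm]; exact Stmt6Aux.dist_adj hc hadjt
      -- t is not a broadcaster, not l, not v
      have htv : t ≠ v := hadjt.ne'
      have hft : f t = 0 := by
        by_contra h
        have h0 : 0 < f t := Nat.pos_of_ne_zero h
        have h1 := hpair v t (Ne.symm htv) hfv h0
        have h2 : T.dist v t = 1 := Stmt6Aux.dist_adj hc hadjt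
        omega
      have htl : t ≠ l := by
        intro h
        have h2 : T.dist v t = 1 := Stmt6Aux.dist_adj hc hadjt
        rw [h] at h2
        have : T.dist v l = T.dist l v := SimpleGraph.dist_comm ..
        omega
      set g := Function.update (Function.update f v 0) t (f v + 1) with hg
      have hgt : g t = f v + 1 := by rw [hg, Function.update_self]
      have hgv : g v = 0 := by
        rw [hg, Function.update_of_ne (Ne.symm htv), Function.update_self]
      have hgy : ∀ y, y ≠ t → y ≠ v → g y = f y := by
        intro y h1 h2
        rw [hg, Function.update_of_ne h1, Function.update_of_ne h2]
      have hbg : IsBroadcast T g := by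
        intro x
        by_cases hx1 : x = t
        · rw [hx1, hgt]
          have h1 : T.dist t w₀ = T.dist t v + T.dist v w₀ := hsep_t w₀ hw₀v hw₀s
          have h2 : T.dist t w₀ ≤ gecc T t := hgecc t w₀
          omega
        · by_cases hx2 : x = v
          · rw [hx2, hgv]; exact Nat.zero_le _
          · rw [hgy x hx1 hx2]; exact hf.1 x
      have hpg : ∀ x y, x ≠ y → 0 < g x → 0 < g y → g x + g y ≤ T.dist x y := by
        have key2 : ∀ y, y ≠ t → y ≠ v → 0 < g y → g t + g y ≤ T.dist t y := by
          intro y h1 h2 hy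
          have hyf : 0 < f y := by
            have := hgy y h1 h2; rw [this] at hy; exact hy
          have h3 : f v + f y ≤ T.dist v y := hpair v y (Ne.symm h2) hfv hyf
          have h4 : T.dist t y = T.dist t v + T.dist v y :=
            hsep_t y h2 (hbehind y h2 hyf)
          rw [hgt, hgy y h1 h2]
          omega
        intro x y hxy hx hy
        have hxv : x ≠ v := by intro h; rw [h, hgv] at hx; omega
        have hyv : y ≠ v := by intro h; rw [h, hgv] at hy; omega
        by_cases hxt : x = t
        · have hyt : y ≠ t := fun hh => hxy (hxt.trans hh.symm)
          rw [hxt]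
          exact key2 y hyt hyv hy
        · by_cases hyt : y = t
          · have h := key2 x hxt hxv hx
            rw [hyt]
            have c1 : T.dist x t = T.dist t x := SimpleGraph.dist_comm ..
            omega
          · rw [hgy x hxt hxv, hgy y hyt hyv]
            have hxf : 0 < f x := by
              have := hgy x hxt hxv; rw [this] at hx; exact hx
            have hyf : 0 < f y := by
              have := hgy y hyt hyv; rw [this] at hy; exact hy
            exact hpair x y hxy hxf hyf
      have hle := himpr g (Stmt6Aux.pairwise_bnIndep hc hbg hpg)
      have e1 := Stmt6Aux.bweight_update (Function.update f v 0) t (f v + 1)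
      have e2 := Stmt6Aux.bweight_update f v 0
      have e3 : (Function.update f v 0) t = 0 := by
        rw [Function.update_of_ne htv]; exact hft
      rw [← hg] at e1
      rw [e3] at e1
      omega


end
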